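/- Let all X_i take values in a common measurable space, and suppose P satisfies: (1) the composition property: for all distinct i, j, k ∈ V and C ⊆ V∖{i,j,k}, {i} ⫫ {j} | C and {i} ⫫ {k} | C imply {i} ⫫ {j,k} | C; and (2) conditional exchangeability: for every non-collider v-configuration i∼k∼j in the DAG G_0, the regular conditional distribution of the triple (X_i, X_j, X_k) given the σ-algebra generated by (X_l)_{l∈V∖{i,j,k}} is almost surely invariant under permutations of the three coordinates. Then P is V-OUS with respect to G_0. -/

import Mathlib

open MeasureTheory ProbabilityTheory

/-- A directed acyclic graph on vertex set `V`: a directed edge relation with no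
directed cycles (a directed path from a node to itself). -/
structure DAG (V : Type*) where
  Edge : V → V → Prop
  acyclic : ∀ i, ¬ Relation.TransGen Edge i i

namespace DAG

variable {V : Type*}

/-- `i` and `j` are adjacent if there is a directed edge between them in either direction. -/
def Adj (G : DAG V) (i j : V) : Prop := G.Edge i j ∨ G.Edge j i

/-- `an_G(C)`: the set of nodes not in `C` with a directed path to some node of `C`. -/
def ancestors (G : DAG V) (C : Set V) : Set V :=
  {i | i ∉ C ∧ ∃ j ∈ C, Relation.TransGen G.Edge i j}

/-- A path between `a` and `b` in (the skeleton of) a DAG `G`: a sequence of at least two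
distinct vertices starting at `a`, ending at `b`, with consecutive vertices adjacent. -/
structure Path (G : DAG V) (a b : V) where
  n : ℕ
  npos : 0 < n
  f : Fin (n + 1) → V
  first : f 0 = a
  last : f (Fin.last n) = b
  adj : ∀ i : Fin n, G.Adj (f i.castSucc) (f i.succ)
  inj : Function.Injective f

/-- The intermediate node at position `t` of the path is a collider on the path:
both incident edges of the path point into it. -/
def Path.ColliderAt {G : DAG V} {a b : V} (π : Path G a b) (t : ℕ)
    (h1 : 0 < t) (h2 : t < π.n) : Prop :=
  G.Edge (π.f ⟨t - 1, by omega⟩) (π.f ⟨t, by omega⟩) ∧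
  G.Edge (π.f ⟨t + 1, by omega⟩) (π.f ⟨t, by omega⟩)

/-- A path is blocked by `C` if some intermediate non-collider on the path lies in `C`,
or some collider `m` on the path satisfies `m ∉ C ∪ an_G(C)`. -/
def Path.Blocked {G : DAG V} {a b : V} (π : Path G a b) (C : Set V) : Prop :=
  ∃ (t : ℕ) (h1 : 0 < t) (h2 : t < π.n),
    (¬ π.ColliderAt t h1 h2 ∧ π.f ⟨t, by omega⟩ ∈ C) ∨
    (π.ColliderAt t h1 h2 ∧ π.f ⟨t, by omega⟩ ∉ C ∪ G.ancestors C)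

/-- d-separation: every path between a node of `A` and a node of `B` is blocked by `C`. -/
def dSep (G : DAG V) (A B C : Set V) : Prop :=
  ∀ a ∈ A, ∀ b ∈ B, ∀ π : Path G a b, π.Blocked C

/-- Two DAGs are Markov equivalent if they have exactly the same d-separations. -/
def MarkovEquiv (G₁ G₂ : DAG V) : Prop :=
  ∀ A B C : Set V, Disjoint A B → Disjoint A C → Disjoint B C →
    (G₁.dSep A B C ↔ G₂.dSep A B C)

/-- A v-configuration `i ∼ k ∼ j` in the DAG: `i, k, j` distinct, `i` and `j` each
adjacent to `k`, but `i` and `j` not adjacent. -/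
def VConfig (G : DAG V) (i k j : V) : Prop :=
  i ≠ j ∧ i ≠ k ∧ j ≠ k ∧ G.Adj i k ∧ G.Adj j k ∧ ¬ G.Adj i j

/-- A collider v-configuration `i → k ← j`. -/
def IsCollider (G : DAG V) (i k j : V) : Prop :=
  G.VConfig i k j ∧ G.Edge i k ∧ G.Edge j k

/-- A non-collider v-configuration. -/
def IsNonCollider (G : DAG V) (i k j : V) : Prop :=
  G.VConfig i k j ∧ ¬ (G.Edge i k ∧ G.Edge j k)

end DAG

/-- A v-configuration `i ∼ k ∼ j` in an undirected graph given by an adjacency relation. -/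
def VConfigRel {V : Type*} (A : V → V → Prop) (i k j : V) : Prop :=
  i ≠ j ∧ i ≠ k ∧ j ≠ k ∧ A i k ∧ A j k ∧ ¬ A i j

section Prob

variable {V : Type*} {Ω : Type*} [MeasurableSpace Ω] [StandardBorelSpace Ω] [Nonempty Ω]
  {E : V → Type*} [∀ i, MeasurableSpace (E i)]

/-- `A ⫫ B | C`: the families `(X i)_{i ∈ A}` and `(X j)_{j ∈ B}` are conditionally
independent given the σ-algebra generated by `(X k)_{k ∈ C}`, under `μ`. -/
def CI (μ : Measure Ω) [IsFiniteMeasure μ] (X : ∀ i, Ω → E i)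
    (hX : ∀ i, Measurable (X i)) (A B C : Set V) : Prop :=
  CondIndepFun (MeasurableSpace.comap (fun ω => fun k : C => X k.1 ω) inferInstance)
    ((measurable_pi_iff.mpr fun k : C => hX k.1).comap_le)
    (fun ω => fun i : A => X i.1 ω) (fun ω => fun j : B => X j.1 ω) μ

variable (μ : Measure Ω) [IsFiniteMeasure μ] (X : ∀ i, Ω → E i) (hX : ∀ i, Measurable (X i))

/-- The skeleton of `P`: distinct `i, j` are adjacent iff no `C ⊆ V \ {i,j}` renders
`{i} ⫫ {j} | C`. -/
def SkP (i j : V) : Prop :=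
  i ≠ j ∧ ¬ ∃ C : Set V, C ⊆ ({i, j} : Set V)ᶜ ∧ CI μ X hX {i} {j} C

/-- `P` is Markovian to `G`: every d-separation implies the corresponding
conditional independence. -/
def MarkovTo (G : DAG V) : Prop :=
  ∀ A B C : Set V, Disjoint A B → Disjoint A C → Disjoint B C →
    G.dSep A B C → CI μ X hX A B C

/-- Adjacency faithfulness: adjacent nodes of `G` are separated by no conditioning set. -/
def AdjFaithful (G : DAG V) : Prop :=
  ∀ i j : V, G.Adj i j → ¬ ∃ C : Set V, C ⊆ ({i, j} : Set V)ᶜ ∧ CI μ X hX {i} {j} C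

/-- `sk(P) = sk(G)`. -/
def SkelEq (G : DAG V) : Prop :=
  ∀ i j : V, G.Adj i j ↔ SkP μ X hX i j

/-- V-ordered upward stability wrt `G`. -/
def VOUS (G : DAG V) : Prop :=
  ∀ i k j : V, G.IsNonCollider i k j → ∀ C : Set V, C ⊆ ({i, j, k} : Set V)ᶜ →
    CI μ X hX {i} {j} C → CI μ X hX {i} {j} (C ∪ {k})

/-- Collider-stability wrt `G`. -/
def ColliderStable (G : DAG V) : Prop :=
  ∀ i k j : V, G.IsCollider i k j →
    ∃ C : Set V, C ⊆ ({i, j, k} : Set V)ᶜ ∧ CI μ X hX {i} {j} C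

/-- V-stability of `P`. -/
def VStable : Prop :=
  ∀ i k j : V, VConfigRel (SkP μ X hX) i k j → ∀ C : Set V, C ⊆ ({i, j, k} : Set V)ᶜ →
    ¬ (CI μ X hX {i} {j} C ∧ CI μ X hX {i} {j} (C ∪ {k}))

/-- The orientation rule assigns the v-configuration `i ∼ k ∼ j` of `sk(P)` to be a
collider. -/
def AssignedCollider (i k j : V) : Prop :=
  VConfigRel (SkP μ X hX) i k j ∧
  ∃ C : Set V, C ⊆ ({i, j, k} : Set V)ᶜ ∧
    CI μ X hX {i} {j} C ∧ ¬ CI μ X hX {i} {j} (C ∪ {k})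

/-- The orientation rule assigns the v-configuration `i ∼ k ∼ j` of `sk(P)` to be a
non-collider. -/
def AssignedNonCollider (i k j : V) : Prop :=
  VConfigRel (SkP μ X hX) i k j ∧
  ∀ C : Set V, C ⊆ ({i, j} : Set V)ᶜ → CI μ X hX {i} {j} C → k ∈ C

/-- A DAG `G` satisfies the V-OUS and collider-stable orientation rule wrt `P`. -/
def SatisfiesRule (G : DAG V) : Prop :=
  SkelEq μ X hX G ∧
  (∀ i k j : V, AssignedCollider μ X hX i k j → G.IsCollider i k j) ∧
  (∀ i k j : V, AssignedNonCollider μ X hX i k j → G.IsNonCollider i k j)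

/-- Modified V-stability: any two DAGs `G` with `sk(G) = sk(P)` to which `P` is V-OUS and
collider-stable are Markov equivalent. -/
def ModifiedVStable : Prop :=
  ∀ G₁ G₂ : DAG V,
    SkelEq μ X hX G₁ → VOUS μ X hX G₁ → ColliderStable μ X hX G₁ →
    SkelEq μ X hX G₂ → VOUS μ X hX G₂ → ColliderStable μ X hX G₂ →
    DAG.MarkovEquiv G₁ G₂

/-- Ordered upward stability wrt `G`. -/
def OUS (G : DAG V) : Prop :=
  ∀ i j k : V, i ≠ j → i ≠ k → j ≠ k → k ∈ G.ancestors {i, j} →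
    ∀ C : Set V, C ⊆ ({i, j, k} : Set V)ᶜ →
      CI μ X hX {i} {j} C → CI μ X hX {i} {j} (C ∪ {k})

/-- Ordered downward stability wrt `G`. -/
def ODS (G : DAG V) : Prop :=
  ∀ i j k : V, i ≠ j → i ≠ k → j ≠ k →
    ∀ C : Set V, C ⊆ ({i, j, k} : Set V)ᶜ → k ∉ G.ancestors ({i, j} ∪ C) →
      CI μ X hX {i} {j} (C ∪ {k}) → CI μ X hX {i} {j} C

end Prob

variable {V : Type*} [Fintype V] {Ω : Type*} [MeasurableSpace Ω] [StandardBorelSpace Ω]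
  [Nonempty Ω] {E : Type*} [MeasurableSpace E] [StandardBorelSpace E] [Nonempty E]
  (μ : MeasureTheory.Measure Ω) [MeasureTheory.IsProbabilityMeasure μ]
  (X : V → Ω → E) (hX : ∀ i, Measurable (X i))

section CIHelpers


variable {α β γ δ ζ : Type*}

lemma comap_comp_le' {mα : MeasurableSpace α} {mβ : MeasurableSpace β} {Ω₀ : Type*}
    (u : Ω₀ → α) {F : α → β} (hF : Measurable F) :
    MeasurableSpace.comap (F ∘ u) mβ ≤ MeasurableSpace.comap u mα := by
  rintro s ⟨t, ht, rfl⟩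
  exact ⟨F ⁻¹' t, hF ht, rfl⟩

lemma measure_ext_prod {mα : MeasurableSpace α} {mβ : MeasurableSpace β}
    (μ₁ μ₂ : Measure (α × β)) [IsFiniteMeasure μ₁] [IsFiniteMeasure μ₂]
    (h : ∀ s t, MeasurableSet s → MeasurableSet t → μ₁ (s ×ˢ t) = μ₂ (s ×ˢ t)) :
    μ₁ = μ₂ := by
  refine ext_of_generate_finite _ generateFrom_prod.symm isPiSystem_prod ?_ ?_
  · rintro w ⟨s, hs, t, ht, rfl⟩
    exact h s t hs ht
  · simpa using h Set.univ Set.univ MeasurableSet.univ MeasurableSet.univ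

lemma measure_ext_prod3R {mα : MeasurableSpace α} {mβ : MeasurableSpace β}
    {mγ : MeasurableSpace γ}
    (μ₁ μ₂ : Measure (α × β × γ)) [IsFiniteMeasure μ₁] [IsFiniteMeasure μ₂]
    (h : ∀ s t u, MeasurableSet s → MeasurableSet t → MeasurableSet u →
      μ₁ (s ×ˢ t ×ˢ u) = μ₂ (s ×ˢ t ×ˢ u)) :
    μ₁ = μ₂ := by
  refine measure_ext_prod _ _ fun s w hs hw => ?_
  have key : ∀ (μ₀ : Measure (α × β × γ)) (w : Set (β × γ)), MeasurableSet w →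
      μ₀ (s ×ˢ w) = ((μ₀.restrict (s ×ˢ Set.univ)).map Prod.snd) w := by
    intro μ₀ w hw
    rw [Measure.map_apply measurable_snd hw, Measure.restrict_apply (measurable_snd hw)]
    congr 1
    ext p
    simp [Set.mem_prod, and_comm]
  rw [key μ₁ w hw, key μ₂ w hw]
  congr 1
  refine measure_ext_prod _ _ fun t u ht hu => ?_
  rw [← key μ₁ _ (ht.prod hu), ← key μ₂ _ (ht.prod hu), h s t u hs ht hu]

lemma measure_ext_prod3L {mα : MeasurableSpace α} {mβ : MeasurableSpace β}
    {mγ : MeasurableSpace γ}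
    (μ₁ μ₂ : Measure ((α × β) × γ)) [IsFiniteMeasure μ₁] [IsFiniteMeasure μ₂]
    (h : ∀ s t u, MeasurableSet s → MeasurableSet t → MeasurableSet u →
      μ₁ ((s ×ˢ t) ×ˢ u) = μ₂ ((s ×ˢ t) ×ˢ u)) :
    μ₁ = μ₂ := by
  refine measure_ext_prod _ _ fun w u hw hu => ?_
  have key : ∀ (μ₀ : Measure ((α × β) × γ)) (w : Set (α × β)), MeasurableSet w →
      μ₀ (w ×ˢ u) = ((μ₀.restrict (Set.univ ×ˢ u)).map Prod.fst) w := by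
    intro μ₀ w hw
    rw [Measure.map_apply measurable_fst hw, Measure.restrict_apply (measurable_fst hw)]
    congr 1
    ext p
    simp [Set.mem_prod, and_comm]
  rw [key μ₁ w hw, key μ₂ w hw]
  congr 1
  refine measure_ext_prod _ _ fun s t hs ht => ?_
  rw [← key μ₁ _ (hs.prod ht), ← key μ₂ _ (hs.prod ht), h s t u hs ht hu]




variable {Ω₀ : Type*} {mΩ₀ : MeasurableSpace Ω₀} [StandardBorelSpace Ω₀] [Nonempty Ω₀]
  {μ₀ : Measure Ω₀} [IsFiniteMeasure μ₀]
  {β γ δ : Type*} [MeasurableSpace β] [StandardBorelSpace β] [Nonempty β]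
  [MeasurableSpace γ] [MeasurableSpace δ]

/-- Characterization of conditional independence via `condDistrib`. -/
lemma ciChar {f : Ω₀ → β} {g : Ω₀ → γ} {h : Ω₀ → δ}
    (hf : Measurable f) (hg : Measurable g) (hh : Measurable h) :
    CondIndepFun (MeasurableSpace.comap h inferInstance) hh.comap_le f g μ₀ ↔
    ∀ s t u, MeasurableSet s → MeasurableSet t → MeasurableSet u →
      μ₀ (f ⁻¹' s ∩ g ⁻¹' t ∩ h ⁻¹' u) =
        ∫⁻ ω in g ⁻¹' t ∩ h ⁻¹' u, condDistrib f h μ₀ (h ω) s ∂μ₀ := by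
  have hmh : MeasurableSpace.comap h inferInstance ≤ mΩ₀ := hh.comap_le
  haveI : SigmaFinite (μ₀.trim hmh) := by
    haveI := isFiniteMeasure_trim (μ := μ₀) hmh
    infer_instance
  set κ := condDistrib f h μ₀ with hκ_def
  have hq_meas : ∀ {s : Set β}, MeasurableSet s →
      Measurable[MeasurableSpace.comap h inferInstance] fun ω => ((κ (h ω)) s).toReal :=
    fun hs => (measurable_condDistrib (μ := μ₀) hs).ennreal_toReal
  have hq_bdd : ∀ (s : Set β) (ω : Ω₀), ((κ (h ω)) s).toReal ≤ 1 := by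
    intro s ω
    exact ENNReal.toReal_le_of_le_ofReal zero_le_one (by simpa using prob_le_one)
  have L2L : ∀ {s : Set β} (_ : MeasurableSet s) (A : Set Ω₀) (_ : MeasurableSet A),
      ∫ ω in A, ((κ (h ω)) s).toReal ∂μ₀ = (∫⁻ ω in A, (κ (h ω)) s ∂μ₀).toReal := by
    intro s hs A hA
    rw [integral_toReal]
    · exact ((measurable_condDistrib (μ := μ₀) hs).mono hmh le_rfl).aemeasurable.restrict
    · exact Filter.Eventually.of_forall fun ω => measure_lt_top _ _
  have hfin : ∀ {s : Set β} (_ : MeasurableSet s) (A : Set Ω₀),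
      ∫⁻ ω in A, (κ (h ω)) s ∂μ₀ ≠ ⊤ := by
    intro s hs A
    refine ne_of_lt (lt_of_le_of_lt ?_ (measure_lt_top μ₀ Set.univ))
    calc ∫⁻ ω in A, (κ (h ω)) s ∂μ₀ ≤ ∫⁻ _ in A, 1 ∂μ₀ :=
          lintegral_mono fun ω => prob_le_one
      _ = μ₀ A := by simp
      _ ≤ μ₀ Set.univ := measure_mono (Set.subset_univ _)
  -- pull-out property
  have P : ∀ {s : Set β} (_ : MeasurableSet s) {t : Set γ} (_ : MeasurableSet t)
      {u : Set δ} (_ : MeasurableSet u),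
      ∫ ω in g ⁻¹' t ∩ h ⁻¹' u, ((κ (h ω)) s).toReal ∂μ₀ =
        ∫ ω in h ⁻¹' u, ((κ (h ω)) s).toReal *
          (μ₀⟦g ⁻¹' t | MeasurableSpace.comap h inferInstance⟧) ω ∂μ₀ := by
    intro s hs t ht u hu
    set q : Ω₀ → ℝ := fun ω => ((κ (h ω)) s).toReal with hq_def
    set r : Ω₀ → ℝ := (g ⁻¹' t).indicator (fun _ => (1:ℝ)) with hr_def
    have hr_int : Integrable r μ₀ := (integrable_const (1:ℝ)).indicator (hg ht)
    have hq_sm : AEStronglyMeasurable q μ₀ :=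
      ((hq_meas hs).mono hmh le_rfl).aestronglyMeasurable
    have hq_nrm : ∃ C, ∀ ω, ‖q ω‖ ≤ C :=
      ⟨1, fun ω => by rw [Real.norm_of_nonneg ENNReal.toReal_nonneg]; exact hq_bdd s ω⟩
    have hqr_int : Integrable (fun ω => q ω * r ω) μ₀ := hr_int.bdd_mul hq_sm (Filter.Eventually.of_forall hq_nrm.choose_spec)
    have step1 : ∫ ω in g ⁻¹' t ∩ h ⁻¹' u, q ω ∂μ₀ = ∫ ω in h ⁻¹' u, q ω * r ω ∂μ₀ := by
      have heq : (fun ω => q ω * r ω) = (g ⁻¹' t).indicator q := by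
        funext ω
        by_cases hω : ω ∈ g ⁻¹' t <;>
          simp [hr_def, Set.indicator_of_mem, Set.indicator_of_notMem, hω]
      rw [heq, setIntegral_indicator (hg ht), Set.inter_comm]
    have step2 : ∫ ω in h ⁻¹' u, q ω * r ω ∂μ₀ =
        ∫ ω in h ⁻¹' u, (μ₀[fun ω => q ω * r ω | MeasurableSpace.comap h inferInstance]) ω ∂μ₀ :=
      (setIntegral_condExp hmh hqr_int ⟨u, hu, rfl⟩).symm
    have step3 : (μ₀[fun ω => q ω * r ω | MeasurableSpace.comap h inferInstance])
        =ᵐ[μ₀] fun ω => q ω * (μ₀[r | MeasurableSpace.comap h inferInstance]) ω :=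
      condExp_mul_of_stronglyMeasurable_left ((hq_meas hs).stronglyMeasurable)
        (by exact hqr_int) hr_int
    rw [step1, step2, setIntegral_congr_ae (hh hu) (step3.mono fun ω hω _ => hω)]
  constructor
  · intro hCI s t u hs ht hu
    have H := (condIndepFun_iff_condExp_inter_preimage_eq_mul hf hg).mp hCI s t hs ht
    have F1 : (fun ω => ((κ (h ω)) s).toReal)
        =ᵐ[μ₀] μ₀⟦f ⁻¹' s | MeasurableSpace.comap h inferInstance⟧ :=
      condDistrib_ae_eq_condExp hh hf hs
    have hind_int : Integrable ((f ⁻¹' s ∩ g ⁻¹' t).indicator fun _ => (1:ℝ)) μ₀ :=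
      (integrable_const (1:ℝ)).indicator ((hf hs).inter (hg ht))
    refine ((ENNReal.toReal_eq_toReal_iff' (measure_ne_top μ₀ _) (hfin hs _)).mp ?_)
    calc (μ₀ (f ⁻¹' s ∩ g ⁻¹' t ∩ h ⁻¹' u)).toReal
        = ∫ ω in h ⁻¹' u, ((f ⁻¹' s ∩ g ⁻¹' t).indicator fun _ => (1:ℝ)) ω ∂μ₀ := by
          rw [setIntegral_indicator ((hf hs).inter (hg ht)), setIntegral_const,
            Set.inter_comm, smul_eq_mul, mul_one, measureReal_def]
      _ = ∫ ω in h ⁻¹' u,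
            (μ₀⟦f ⁻¹' s ∩ g ⁻¹' t | MeasurableSpace.comap h inferInstance⟧) ω ∂μ₀ :=
          (setIntegral_condExp hmh hind_int ⟨u, hu, rfl⟩).symm
      _ = ∫ ω in h ⁻¹' u, (μ₀⟦f ⁻¹' s | MeasurableSpace.comap h inferInstance⟧) ω *
            (μ₀⟦g ⁻¹' t | MeasurableSpace.comap h inferInstance⟧) ω ∂μ₀ :=
          setIntegral_congr_ae (hh hu) (H.mono fun ω hω _ => hω)
      _ = ∫ ω in h ⁻¹' u, ((κ (h ω)) s).toReal *
            (μ₀⟦g ⁻¹' t | MeasurableSpace.comap h inferInstance⟧) ω ∂μ₀ := by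
          refine setIntegral_congr_ae (hh hu) ?_
          filter_upwards [F1] with ω hω _
          rw [← hω]
      _ = ∫ ω in g ⁻¹' t ∩ h ⁻¹' u, ((κ (h ω)) s).toReal ∂μ₀ := (P hs ht hu).symm
      _ = (∫⁻ ω in g ⁻¹' t ∩ h ⁻¹' u, (κ (h ω)) s ∂μ₀).toReal :=
          L2L hs _ ((hg ht).inter (hh hu))
  · intro H
    rw [condIndepFun_iff_condExp_inter_preimage_eq_mul hf hg]
    intro s t hs ht
    have F1 : (fun ω => ((κ (h ω)) s).toReal)
        =ᵐ[μ₀] μ₀⟦f ⁻¹' s | MeasurableSpace.comap h inferInstance⟧ :=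
      condDistrib_ae_eq_condExp hh hf hs
    have hind_int : Integrable ((f ⁻¹' s ∩ g ⁻¹' t).indicator fun _ => (1:ℝ)) μ₀ :=
      (integrable_const (1:ℝ)).indicator ((hf hs).inter (hg ht))
    have hg₀_int : Integrable (fun ω => ((κ (h ω)) s).toReal *
        (μ₀⟦g ⁻¹' t | MeasurableSpace.comap h inferInstance⟧) ω) μ₀ :=
      integrable_condExp.bdd_mul ((hq_meas hs).mono hmh le_rfl).aestronglyMeasurable
        (Filter.Eventually.of_forall fun ω => show _ ≤ (1:ℝ) by rw [Real.norm_of_nonneg ENNReal.toReal_nonneg]; exact hq_bdd s ω)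
    have key : (fun ω => ((κ (h ω)) s).toReal *
          (μ₀⟦g ⁻¹' t | MeasurableSpace.comap h inferInstance⟧) ω)
        =ᵐ[μ₀] μ₀[(f ⁻¹' s ∩ g ⁻¹' t).indicator fun _ => (1:ℝ) |
            MeasurableSpace.comap h inferInstance] := by
      refine ae_eq_condExp_of_forall_setIntegral_eq hmh hind_int
        (fun A _ _ => hg₀_int.integrableOn) ?_
        (((hq_meas hs).stronglyMeasurable.mul stronglyMeasurable_condExp).aestronglyMeasurable)
      rintro A ⟨u, hu, rfl⟩ -
      calc ∫ ω in h ⁻¹' u, ((κ (h ω)) s).toReal *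
              (μ₀⟦g ⁻¹' t | MeasurableSpace.comap h inferInstance⟧) ω ∂μ₀
          = ∫ ω in g ⁻¹' t ∩ h ⁻¹' u, ((κ (h ω)) s).toReal ∂μ₀ := (P hs ht hu).symm
        _ = (∫⁻ ω in g ⁻¹' t ∩ h ⁻¹' u, (κ (h ω)) s ∂μ₀).toReal :=
            L2L hs _ ((hg ht).inter (hh hu))
        _ = (μ₀ (f ⁻¹' s ∩ g ⁻¹' t ∩ h ⁻¹' u)).toReal := by rw [H s t u hs ht hu]
        _ = ∫ ω in h ⁻¹' u, ((f ⁻¹' s ∩ g ⁻¹' t).indicator fun _ => (1:ℝ)) ω ∂μ₀ := by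
            rw [setIntegral_indicator ((hf hs).inter (hg ht)), setIntegral_const,
              Set.inter_comm, smul_eq_mul, mul_one, measureReal_def]
    calc μ₀⟦f ⁻¹' s ∩ g ⁻¹' t | MeasurableSpace.comap h inferInstance⟧
        =ᵐ[μ₀] fun ω => ((κ (h ω)) s).toReal *
          (μ₀⟦g ⁻¹' t | MeasurableSpace.comap h inferInstance⟧) ω := key.symm
      _ =ᵐ[μ₀] fun ω => (μ₀⟦f ⁻¹' s | MeasurableSpace.comap h inferInstance⟧) ω *
          (μ₀⟦g ⁻¹' t | MeasurableSpace.comap h inferInstance⟧) ω := by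
          filter_upwards [F1] with ω hω
          rw [hω]

set_option linter.unusedSectionVars false

/-- Conditional independence given `σ(h)` only depends on the law of `(f, g, h)`. -/
lemma ci_of_map_eq {Ω₀' : Type*} {mΩ₀' : MeasurableSpace Ω₀'} [StandardBorelSpace Ω₀']
    [Nonempty Ω₀'] {μ₀' : Measure Ω₀'} [IsFiniteMeasure μ₀']
    {f : Ω₀ → β} {g : Ω₀ → γ} {h : Ω₀ → δ} {f' : Ω₀' → β} {g' : Ω₀' → γ} {h' : Ω₀' → δ}
    (hf : Measurable f) (hg : Measurable g) (hh : Measurable h)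
    (hf' : Measurable f') (hg' : Measurable g') (hh' : Measurable h')
    (hmap : μ₀.map (fun ω => (f ω, g ω, h ω)) = μ₀'.map (fun ω => (f' ω, g' ω, h' ω)))
    (hCI : CondIndepFun (MeasurableSpace.comap h inferInstance) hh.comap_le f g μ₀) :
    CondIndepFun (MeasurableSpace.comap h' inferInstance) hh'.comap_le f' g' μ₀' := by
  have hT : Measurable fun ω => (f ω, g ω, h ω) := hf.prodMk (hg.prodMk hh)
  have hT' : Measurable fun ω => (f' ω, g' ω, h' ω) := hf'.prodMk (hg'.prodMk hh')
  -- laws of (h, f) agree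
  have hhf : μ₀.map (fun ω => (h ω, f ω)) = μ₀'.map (fun ω => (h' ω, f' ω)) := by
    have hG : Measurable fun p : β × γ × δ => (p.2.2, p.1) :=
      (measurable_snd.comp measurable_snd).prodMk measurable_fst
    calc μ₀.map (fun ω => (h ω, f ω))
        = (μ₀.map (fun ω => (f ω, g ω, h ω))).map (fun p => (p.2.2, p.1)) := by
          rw [Measure.map_map hG hT]; rfl
      _ = (μ₀'.map (fun ω => (f' ω, g' ω, h' ω))).map (fun p => (p.2.2, p.1)) := by rw [hmap]
      _ = μ₀'.map (fun ω => (h' ω, f' ω)) := by rw [Measure.map_map hG hT']; rfl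
  -- condDistribs agree
  have hκ : condDistrib f h μ₀ = condDistrib f' h' μ₀' := by
    rw [condDistrib_def, condDistrib_def]
    congr 1
  -- laws of (g, h) agree
  have hgh : μ₀.map (fun ω => (g ω, h ω)) = μ₀'.map (fun ω => (g' ω, h' ω)) := by
    have hG : Measurable fun p : β × γ × δ => p.2 := measurable_snd
    calc μ₀.map (fun ω => (g ω, h ω))
        = (μ₀.map (fun ω => (f ω, g ω, h ω))).map (fun p => p.2) := by
          rw [Measure.map_map hG hT]; rfl
      _ = μ₀'.map (fun ω => (g' ω, h' ω)) := by rw [hmap, Measure.map_map hG hT']; rfl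
  rw [ciChar hf' hg' hh']
  have H := (ciChar hf hg hh).mp hCI
  intro s t u hs ht hu
  have hκs : Measurable fun p : γ × δ => condDistrib f h μ₀ p.2 s :=
    (Kernel.measurable_coe _ hs).comp measurable_snd
  have e1 : μ₀' (f' ⁻¹' s ∩ g' ⁻¹' t ∩ h' ⁻¹' u) = μ₀ (f ⁻¹' s ∩ g ⁻¹' t ∩ h ⁻¹' u) := by
    have h1 : f' ⁻¹' s ∩ g' ⁻¹' t ∩ h' ⁻¹' u =
        (fun ω => (f' ω, g' ω, h' ω)) ⁻¹' (s ×ˢ t ×ˢ u) := by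
      ext ω; simp [Set.mem_prod, and_assoc]
    have h2 : f ⁻¹' s ∩ g ⁻¹' t ∩ h ⁻¹' u =
        (fun ω => (f ω, g ω, h ω)) ⁻¹' (s ×ˢ t ×ˢ u) := by
      ext ω; simp [Set.mem_prod, and_assoc]
    rw [h1, h2, ← Measure.map_apply hT (hs.prod (ht.prod hu)),
      ← Measure.map_apply hT' (hs.prod (ht.prod hu)), hmap]
  have e2 : ∫⁻ ω in g' ⁻¹' t ∩ h' ⁻¹' u, condDistrib f' h' μ₀' (h' ω) s ∂μ₀' =
      ∫⁻ ω in g ⁻¹' t ∩ h ⁻¹' u, condDistrib f h μ₀ (h ω) s ∂μ₀ := by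
    rw [← hκ]
    have l1 : ∫⁻ ω in g ⁻¹' t ∩ h ⁻¹' u, condDistrib f h μ₀ (h ω) s ∂μ₀ =
        ∫⁻ p in t ×ˢ u, condDistrib f h μ₀ p.2 s ∂(μ₀.map fun ω => (g ω, h ω)) := by
      rw [setLIntegral_map (ht.prod hu) hκs (hg.prodMk hh), Set.mk_preimage_prod]
    have l2 : ∫⁻ ω in g' ⁻¹' t ∩ h' ⁻¹' u, condDistrib f h μ₀ (h' ω) s ∂μ₀' =
        ∫⁻ p in t ×ˢ u, condDistrib f h μ₀ p.2 s ∂(μ₀'.map fun ω => (g' ω, h' ω)) := by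
      rw [setLIntegral_map (ht.prod hu) hκs (hg'.prodMk hh'), Set.mk_preimage_prod]
    rw [l1, l2, hgh]
  rw [e1, e2]
  exact H s t u hs ht hu

/-- Weak union: `f ⫫ (g, z) | σ(h)` implies `f ⫫ g | σ(h, z)`. -/
lemma weak_union {ζ : Type*} [MeasurableSpace ζ]
    {f : Ω₀ → β} {g : Ω₀ → γ} {z : Ω₀ → ζ} {h : Ω₀ → δ}
    (hf : Measurable f) (hg : Measurable g) (hz : Measurable z) (hh : Measurable h)
    (hCI : CondIndepFun (MeasurableSpace.comap h inferInstance) hh.comap_le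
      f (fun ω => (g ω, z ω)) μ₀) :
    CondIndepFun (MeasurableSpace.comap (fun ω => (h ω, z ω)) inferInstance)
      (hh.prodMk hz).comap_le f g μ₀ := by
  have hp : Measurable fun ω => (h ω, z ω) := hh.prodMk hz
  set κ := condDistrib f h μ₀ with hκ_def
  set κ' : Kernel (δ × ζ) β := κ.comap (Prod.fst : δ × ζ → δ) measurable_fst with hκ'_def
  have hκmeas : ∀ {s : Set β}, MeasurableSet s → Measurable fun d : δ => κ d s :=
    fun hs => Kernel.measurable_coe _ hs
  have hfz : CondIndepFun (MeasurableSpace.comap h inferInstance) hh.comap_le f z μ₀ := by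
    have := hCI.comp measurable_id measurable_snd
    exact this
  have A := (ciChar hf hz hh).mp hfz
  have A2 := (ciChar hf (hg.prodMk hz) hh).mp hCI
  -- the conditional distribution of f given (h, z) is that given h
  have hcomp : μ₀.map (fun ω => ((h ω, z ω), f ω)) =
      (μ₀.map fun ω => (h ω, z ω)) ⊗ₘ (κ') := by
    refine measure_ext_prod3L _ _ fun u v s hu hv hs => ?_
    rw [Measure.map_apply (hp.prodMk hf) ((hu.prod hv).prod hs),
      Measure.compProd_apply ((hu.prod hv).prod hs)]
    have hind : ∀ p : δ × ζ, (κ') p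
        (Prod.mk p ⁻¹' ((u ×ˢ v) ×ˢ s)) = (u ×ˢ v).indicator (fun p => κ p.1 s) p := by
      intro p
      by_cases hp' : p ∈ u ×ˢ v
      · rw [Set.indicator_of_mem hp', Kernel.comap_apply]
        congr 1
        ext x; simp [hp']
      · rw [Set.indicator_of_notMem hp']
        have : Prod.mk p ⁻¹' ((u ×ˢ v) ×ˢ s) = ∅ := by
          ext x; simp [hp']
        rw [this]; simp
    calc μ₀ ((fun ω => ((h ω, z ω), f ω)) ⁻¹' ((u ×ˢ v) ×ˢ s))
        = μ₀ (f ⁻¹' s ∩ z ⁻¹' v ∩ h ⁻¹' u) := by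
          congr 1; ext ω
          simp only [Set.mem_preimage, Set.mem_prod, Set.mem_inter_iff]; tauto
      _ = ∫⁻ ω in z ⁻¹' v ∩ h ⁻¹' u, κ (h ω) s ∂μ₀ := A s v u hs hv hu
      _ = ∫⁻ ω in (fun ω => (h ω, z ω)) ⁻¹' (u ×ˢ v), κ (h ω) s ∂μ₀ := by
          rw [Set.mk_preimage_prod, Set.inter_comm]
      _ = ∫⁻ p in u ×ˢ v, κ p.1 s ∂(μ₀.map fun ω => (h ω, z ω)) :=
          (setLIntegral_map (hu.prod hv) ((hκmeas hs).comp measurable_fst) hp).symm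
      _ = ∫⁻ p, (u ×ˢ v).indicator (fun p => κ p.1 s) p ∂(μ₀.map fun ω => (h ω, z ω)) :=
          (lintegral_indicator (hu.prod hv) _).symm
      _ = ∫⁻ p, (κ') p (Prod.mk p ⁻¹' ((u ×ˢ v) ×ˢ s))
            ∂(μ₀.map fun ω => (h ω, z ω)) :=
          lintegral_congr fun p => (hind p).symm
  have W1 : ∀ᵐ ω ∂μ₀, condDistrib f (fun ω => (h ω, z ω)) μ₀ (h ω, z ω) = κ (h ω) := by
    have h1 := condDistrib_ae_eq_of_measure_eq_compProd (fun ω => (h ω, z ω)) hf.aemeasurable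
      (κ := κ') hcomp
    have h2 := ae_of_ae_map hp.aemeasurable h1
    filter_upwards [h2] with ω hω
    rw [hω, Kernel.comap_apply]
  -- conclude via ciChar
  rw [ciChar hf hg hp]
  intro s t u' hs ht hu'
  have hw : ∫⁻ ω in g ⁻¹' t ∩ (fun ω => (h ω, z ω)) ⁻¹' u',
      condDistrib f (fun ω => (h ω, z ω)) μ₀ (h ω, z ω) s ∂μ₀ =
      ∫⁻ ω in g ⁻¹' t ∩ (fun ω => (h ω, z ω)) ⁻¹' u', κ (h ω) s ∂μ₀ :=
    lintegral_congr_ae (ae_restrict_of_ae (W1.mono fun ω hω => by simp only [hω]))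
  rw [hw]
  -- compare the two finite measures
  have hT : Measurable fun ω => (g ω, (h ω, z ω)) := hg.prodMk hp
  have hdens : Measurable fun ω => κ (h ω) s := (hκmeas hs).comp hh
  haveI : IsFiniteMeasure (μ₀.withDensity fun ω => κ (h ω) s) := by
    constructor
    rw [withDensity_apply _ MeasurableSet.univ]
    refine lt_of_le_of_lt ?_ (measure_lt_top μ₀ Set.univ)
    calc ∫⁻ ω in Set.univ, κ (h ω) s ∂μ₀ ≤ ∫⁻ _ in Set.univ, 1 ∂μ₀ :=
        lintegral_mono fun ω => prob_le_one
      _ = μ₀ Set.univ := by simp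
  have hρ : (μ₀.restrict (f ⁻¹' s)).map (fun ω => (g ω, (h ω, z ω))) =
      (μ₀.withDensity fun ω => κ (h ω) s).map (fun ω => (g ω, (h ω, z ω))) := by
    refine measure_ext_prod3R _ _ fun t' u v ht' hu hv => ?_
    rw [Measure.map_apply hT (ht'.prod (hu.prod hv)),
      Measure.map_apply hT (ht'.prod (hu.prod hv)),
      Measure.restrict_apply (hT (ht'.prod (hu.prod hv))),
      withDensity_apply _ (hT (ht'.prod (hu.prod hv)))]
    have hset : (fun ω => (g ω, (h ω, z ω))) ⁻¹' (t' ×ˢ u ×ˢ v) =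
        g ⁻¹' t' ∩ (h ⁻¹' u ∩ z ⁻¹' v) := by
      ext ω
      simp only [Set.mem_preimage, Set.mem_prod, Set.mem_inter_iff]
      try tauto
    have hA2 := A2 s (t' ×ˢ v) u hs (ht'.prod hv) hu
    have hset2 : (fun ω => (g ω, z ω)) ⁻¹' (t' ×ˢ v) ∩ h ⁻¹' u =
        (fun ω => (g ω, (h ω, z ω))) ⁻¹' (t' ×ˢ u ×ˢ v) := by
      ext ω
      simp only [Set.mem_preimage, Set.mem_prod, Set.mem_inter_iff]
      try tauto
    have hset3 : f ⁻¹' s ∩ (fun ω => (g ω, z ω)) ⁻¹' (t' ×ˢ v) ∩ h ⁻¹' u =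
        (fun ω => (g ω, (h ω, z ω))) ⁻¹' (t' ×ˢ u ×ˢ v) ∩ f ⁻¹' s := by
      ext ω
      simp only [Set.mem_preimage, Set.mem_prod, Set.mem_inter_iff]
      try tauto
    rw [hset2, hset3] at hA2
    exact hA2
  have e1 : μ₀ (f ⁻¹' s ∩ g ⁻¹' t ∩ (fun ω => (h ω, z ω)) ⁻¹' u') =
      ((μ₀.restrict (f ⁻¹' s)).map (fun ω => (g ω, (h ω, z ω)))) (t ×ˢ u') := by
    rw [Measure.map_apply hT (ht.prod hu'), Measure.restrict_apply (hT (ht.prod hu')),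
      Set.mk_preimage_prod]
    congr 1
    ext ω
    simp only [Set.mem_inter_iff, Set.mem_preimage]
    tauto
  have e2 : ∫⁻ ω in g ⁻¹' t ∩ (fun ω => (h ω, z ω)) ⁻¹' u', κ (h ω) s ∂μ₀ =
      ((μ₀.withDensity fun ω => κ (h ω) s).map (fun ω => (g ω, (h ω, z ω)))) (t ×ˢ u') := by
    rw [Measure.map_apply hT (ht.prod hu'), withDensity_apply _ (hT (ht.prod hu')),
      Set.mk_preimage_prod]
  rw [e1, e2, hρ]


lemma condIndepFun_of_eq {Ω₀ : Type*} {mΩ₀ : MeasurableSpace Ω₀} [StandardBorelSpace Ω₀]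
    {μ₀ : MeasureTheory.Measure Ω₀} [MeasureTheory.IsFiniteMeasure μ₀]
    {β γ : Type*} [MeasurableSpace β] [MeasurableSpace γ]
    {m₁ m₂ : MeasurableSpace Ω₀} (h : m₂ = m₁) {hm₁ : m₁ ≤ mΩ₀} {hm₂ : m₂ ≤ mΩ₀}
    {f : Ω₀ → β} {g : Ω₀ → γ}
    (hCI : ProbabilityTheory.CondIndepFun m₁ hm₁ f g μ₀) :
    ProbabilityTheory.CondIndepFun m₂ hm₂ f g μ₀ := by
  subst h; exact hCI

lemma map_eq_compProd_condDistrib {α E₀ β : Type*} {mα : MeasurableSpace α}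
    [MeasurableSpace E₀] [StandardBorelSpace E₀] [Nonempty E₀] [MeasurableSpace β]
    (μ₀ : MeasureTheory.Measure α) [MeasureTheory.IsFiniteMeasure μ₀]
    {Xf : α → β} {Yf : α → E₀} (hXf : Measurable Xf) (hYf : Measurable Yf) :
    μ₀.map (fun a => (Xf a, Yf a)) =
      μ₀.map Xf ⊗ₘ ProbabilityTheory.condDistrib Yf Xf μ₀ := by
  have hd := MeasureTheory.Measure.disintegrate (μ₀.map (fun a => (Xf a, Yf a)))
    (μ₀.map (fun a => (Xf a, Yf a))).condKernel
  rw [MeasureTheory.Measure.fst_map_prodMk hYf] at hd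
  rw [ProbabilityTheory.condDistrib_def]
  exact hd.symm

end CIHelpers

open ProbabilityTheory in
/-- Composition and conditional exchangeability imply V-OUS wrt `G₀`. -/
theorem stmt_5 (G₀ : DAG V)
    (hcomp : ∀ i j k : V, i ≠ j → i ≠ k → j ≠ k → ∀ C : Set V,
      C ⊆ ({i, j, k} : Set V)ᶜ →
      CI μ X hX {i} {j} C → CI μ X hX {i} {k} C → CI μ X hX {i} {j, k} C)
    (hexch : ∀ i k j : V, G₀.IsNonCollider i k j →
      ∀ σ : Equiv.Perm (Fin 3),
        ∀ᵐ a ∂(μ.map (fun ω => fun l : (({i, j, k} : Set V)ᶜ : Set V) => X l.1 ω)),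
          condDistrib (fun ω => fun m : Fin 3 => ![X i ω, X j ω, X k ω] (σ m))
              (fun ω => fun l : (({i, j, k} : Set V)ᶜ : Set V) => X l.1 ω) μ a =
            condDistrib (fun ω => ![X i ω, X j ω, X k ω])
              (fun ω => fun l : (({i, j, k} : Set V)ᶜ : Set V) => X l.1 ω) μ a) :
    VOUS μ X hX G₀ := by
  intro i k j hnc C hC hij
  obtain ⟨⟨hij_ne, hik_ne, hjk_ne, -, -, -⟩, -⟩ := id hnc
  classical
  have htupleC : Measurable (fun ω => fun c : C => X c.1 ω) :=
    measurable_pi_iff.mpr fun c => hX c.1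
  -- passing between tuple and scalar forms of conditional independence
  have to_scalar : ∀ a b : V, CI μ X hX {a} {b} C →
      CondIndepFun (MeasurableSpace.comap (fun ω => fun c : C => X c.1 ω) inferInstance)
        htupleC.comap_le (X a) (X b) μ := by
    intro a b hab
    exact hab.comp (measurable_pi_apply (⟨a, rfl⟩ : ({a} : Set V)))
      (measurable_pi_apply (⟨b, rfl⟩ : ({b} : Set V)))
  have tuple_eq : ∀ a : V, (fun ω => fun a' : ({a} : Set V) => X a'.1 ω) =
      (fun x : E => fun _ : ({a} : Set V) => x) ∘ (X a) := by
    intro a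
    funext ω a'
    obtain ⟨a', ha'⟩ := a'
    obtain rfl : a' = a := ha'
    rfl
  have hconst : ∀ a : V, Measurable (fun x : E => fun _ : ({a} : Set V) => x) :=
    fun a => measurable_pi_lambda _ fun _ => measurable_id
  have of_scalar : ∀ a b : V,
      CondIndepFun (MeasurableSpace.comap (fun ω => fun c : C => X c.1 ω) inferInstance)
        htupleC.comap_le (X a) (X b) μ → CI μ X hX {a} {b} C := by
    intro a b hab
    show CondIndepFun _ _ _ _ μ
    rw [tuple_eq a, tuple_eq b]
    exact hab.comp (hconst a) (hconst b)
  -- Step 1: exchange `j` and `k` using conditional exchangeability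
  have hR_meas : Measurable (fun ω => fun l : (({i, j, k} : Set V)ᶜ : Set V) => X l.1 ω) :=
    measurable_pi_iff.mpr fun l => hX l.1
  have hTn : ∀ n : Fin 3, Measurable fun ω => ![X i ω, X j ω, X k ω] n := by
    intro n
    fin_cases n <;> simpa using hX _
  have hT : Measurable (fun ω => fun m : Fin 3 => ![X i ω, X j ω, X k ω] m) :=
    measurable_pi_lambda _ hTn
  have hT' : Measurable (fun ω => fun m : Fin 3 =>
      ![X i ω, X j ω, X k ω] ((Equiv.swap 1 2) m)) :=
    measurable_pi_lambda _ fun m => hTn _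
  have hmap1 : μ.map (fun ω => ((fun l : (({i, j, k} : Set V)ᶜ : Set V) => X l.1 ω),
        fun m : Fin 3 => ![X i ω, X j ω, X k ω] ((Equiv.swap 1 2) m))) =
      μ.map (fun ω => ((fun l : (({i, j, k} : Set V)ᶜ : Set V) => X l.1 ω),
        fun m : Fin 3 => ![X i ω, X j ω, X k ω] m)) := by
    rw [map_eq_compProd_condDistrib μ hR_meas hT', map_eq_compProd_condDistrib μ hR_meas hT]
    exact Measure.compProd_congr (hexch i k j hnc (Equiv.swap 1 2))
  -- project the law equality down to `(X i, X ·, tuple C)`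
  have hFmeas : Measurable (fun p : ((({i, j, k} : Set V)ᶜ : Set V) → E) × (Fin 3 → E) =>
      ((p.2 0, p.2 1, fun c : C => p.1 ⟨c.1, hC c.2⟩) : E × E × (C → E))) :=
    ((measurable_pi_apply 0).comp measurable_snd).prodMk
      (((measurable_pi_apply 1).comp measurable_snd).prodMk
        (measurable_pi_lambda _ fun c => (measurable_pi_apply _).comp measurable_fst))
  have hlaw : μ.map (fun ω => (X i ω, X j ω, fun c : C => X c.1 ω)) =
      μ.map (fun ω => (X i ω, X k ω, fun c : C => X c.1 ω)) := by
    have e1 : μ.map (fun ω => (X i ω, X j ω, fun c : C => X c.1 ω)) =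
        (μ.map (fun ω => ((fun l : (({i, j, k} : Set V)ᶜ : Set V) => X l.1 ω),
          fun m : Fin 3 => ![X i ω, X j ω, X k ω] m))).map
          (fun p => ((p.2 0, p.2 1, fun c : C => p.1 ⟨c.1, hC c.2⟩) : E × E × (C → E))) := by
      rw [Measure.map_map hFmeas (hR_meas.prodMk hT)]
      congr 1
    have e2 : μ.map (fun ω => (X i ω, X k ω, fun c : C => X c.1 ω)) =
        (μ.map (fun ω => ((fun l : (({i, j, k} : Set V)ᶜ : Set V) => X l.1 ω),
          fun m : Fin 3 => ![X i ω, X j ω, X k ω] ((Equiv.swap 1 2) m)))).map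
          (fun p => ((p.2 0, p.2 1, fun c : C => p.1 ⟨c.1, hC c.2⟩) : E × E × (C → E))) := by
      rw [Measure.map_map hFmeas (hR_meas.prodMk hT')]
      congr 1
    rw [e1, e2, hmap1]
  have s1 := to_scalar i j hij
  have s2 : CondIndepFun
      (MeasurableSpace.comap (fun ω => fun c : C => X c.1 ω) inferInstance)
      htupleC.comap_le (X i) (X k) μ :=
    ci_of_map_eq (hX i) (hX j) htupleC (hX i) (hX k) htupleC hlaw s1
  have cik : CI μ X hX {i} {k} C := of_scalar i k s2
  -- Step 2: composition
  have cijk : CI μ X hX {i} {j, k} C := hcomp i j k hij_ne hik_ne hjk_ne C hC hij cik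
  -- Step 3: weak union
  have spair : CondIndepFun
      (MeasurableSpace.comap (fun ω => fun c : C => X c.1 ω) inferInstance)
      htupleC.comap_le (X i) (fun ω => (X j ω, X k ω)) μ := by
    have hψ : Measurable (fun v : ({j, k} : Set V) → E =>
        (v ⟨j, Set.mem_insert j {k}⟩, v ⟨k, Set.mem_insert_of_mem j rfl⟩)) :=
      (measurable_pi_apply _).prodMk (measurable_pi_apply _)
    exact cijk.comp (measurable_pi_apply (⟨i, rfl⟩ : ({i} : Set V))) hψ
  have swu : CondIndepFun
      (MeasurableSpace.comap (fun ω => ((fun c : C => X c.1 ω), X k ω)) inferInstance)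
      ((htupleC.prodMk (hX k)).comap_le) (X i) (X j) μ :=
    weak_union (hX i) (hX j) (hX k) htupleC spair
  -- identify the conditioning σ-algebras
  have hσ : MeasurableSpace.comap (fun ω => fun a : (C ∪ {k} : Set V) => X a.1 ω)
        inferInstance =
      MeasurableSpace.comap (fun ω => ((fun c : C => X c.1 ω), X k ω)) inferInstance := by
    apply le_antisymm
    · have hΨ : Measurable (fun p : (C → E) × E => fun a : (C ∪ {k} : Set V) =>
          if h : (a : V) ∈ C then p.1 ⟨a, h⟩ else p.2) := by
        refine measurable_pi_lambda _ fun a => ?_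
        by_cases hac : (a : V) ∈ C
        · simp only [dif_pos hac]
          exact (measurable_pi_apply _).comp measurable_fst
        · simp only [dif_neg hac]
          exact measurable_snd
      have heq : (fun ω => fun a : (C ∪ {k} : Set V) => X a.1 ω) =
          (fun p : (C → E) × E => fun a : (C ∪ {k} : Set V) =>
            if h : (a : V) ∈ C then p.1 ⟨a, h⟩ else p.2) ∘
          (fun ω => ((fun c : C => X c.1 ω), X k ω)) := by
        funext ω
        funext a
        by_cases hac : (a : V) ∈ C
        · simp only [Function.comp_apply, dif_pos hac]
        · have hak : (a : V) = k := by
            rcases a.2 with h | h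
            · exact absurd h hac
            · exact h
          simp only [Function.comp_apply, dif_neg hac]
          rw [hak]
      rw [heq]
      exact comap_comp_le' _ hΨ
    · have hΘ : Measurable (fun v : (C ∪ {k} : Set V) → E =>
          ((fun c : C => v ⟨c.1, Set.mem_union_left _ c.2⟩),
            v ⟨k, Set.mem_union_right _ rfl⟩)) :=
        (measurable_pi_lambda _ fun c => measurable_pi_apply _).prodMk
          (measurable_pi_apply _)
      have heq2 : (fun ω => ((fun c : C => X c.1 ω), X k ω)) =
          (fun v : (C ∪ {k} : Set V) → E =>
            ((fun c : C => v ⟨c.1, Set.mem_union_left _ c.2⟩),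
              v ⟨k, Set.mem_union_right _ rfl⟩)) ∘
          (fun ω => fun a : (C ∪ {k} : Set V) => X a.1 ω) := rfl
      rw [heq2]
      exact comap_comp_le' _ hΘ
  -- conclude
  have swu2 := swu.comp (hconst i) (hconst j)
  rw [← tuple_eq i, ← tuple_eq j] at swu2
  show CondIndepFun _ _ _ _ μ
  exact condIndepFun_of_eq hσ swu2
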